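/- Let C be the solid cone with apex a, unit axis direction u, half-angle θ ∈ (0, π/2), and let O be a closed ball with center q and radius r. Let p₁ = a + ⟪q - a, u⟫ • u be the projection of q onto the axis (assume ⟪q - a, u⟫ > 0), let d = dist(q, p₁) be the distance from q to the axis, and let ρ = ⟪q - a, u⟫ · tan θ be the radius of the cone's cross-section at p₁. If d ≥ ρ + (r + γ)/cos θ for some γ > 0, then dist(x, y) > γ for all x ∈ C and y ∈ O with x, y in the plane through q perpendicular to u; in particular C ∩ O = ∅ restricted to that plane. -/
import Mathlib


open scoped RealInnerProductSpace

/-- safety margin between the cone and the obstacle ball within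
the plane through `q` (equivalently through `p₁`) perpendicular to the axis. -/
theorem stmt_5 (a u q : EuclideanSpace ℝ (Fin 3)) (hu : ‖u‖ = 1)
    (θ : ℝ) (hθ : θ ∈ Set.Ioo 0 (Real.pi / 2))
    (r γ : ℝ) (hr : 0 < r) (hγ : 0 < γ)
    (C : Set (EuclideanSpace ℝ (Fin 3)))
    (hC : C = {x | ⟪x - a, u⟫ ≥ ‖x - a‖ * Real.cos θ})
    (p₁ : EuclideanSpace ℝ (Fin 3)) (hp₁ : p₁ = a + ⟪q - a, u⟫ • u)
    (ht : 0 < ⟪q - a, u⟫)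
    (hfar : dist q p₁ ≥ ⟪q - a, u⟫ * Real.tan θ + (r + γ) / Real.cos θ) :
    ∀ x ∈ C, ∀ y ∈ Metric.closedBall q r,
      ⟪x - p₁, u⟫ = 0 → ⟪y - p₁, u⟫ = 0 → dist x y > γ := by
  intro x hx y hy hxp hyp
  set t : ℝ := ⟪q - a, u⟫ with htdef
  have hθpos := hθ.1
  have hθlt := hθ.2
  have hcos : 0 < Real.cos θ := Real.cos_pos_of_mem_Ioo
    ⟨by linarith [Real.pi_pos], hθlt⟩
  have hcos1 : Real.cos θ < 1 := by
    have := Real.cos_lt_cos_of_nonneg_of_le_pi (x := 0) (y := θ) le_rfl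
      (by linarith [Real.pi_pos]) hθpos
    simpa using this
  have hsin : 0 < Real.sin θ := Real.sin_pos_of_pos_of_lt_pi hθpos
    (by linarith [Real.pi_pos])
  have huu : ⟪u, u⟫ = (1 : ℝ) := by
    rw [real_inner_self_eq_norm_sq, hu]; norm_num
  have hxeq : x - p₁ = (x - a) - t • u := by rw [hp₁]; module
  -- from the plane condition, ⟪x - a, u⟫ = t
  have hxa : ⟪x - a, u⟫ = t := by
    rw [hxeq, inner_sub_left, real_inner_smul_left, huu] at hxp
    linarith
  -- cone condition
  have hcone : t ≥ ‖x - a‖ * Real.cos θ := by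
    rw [hC, Set.mem_setOf_eq, hxa] at hx
    exact hx
  have hna : ‖x - a‖ ≤ t / Real.cos θ := by
    rw [le_div_iff₀ hcos]; linarith
  -- distance from x to p₁
  have hsq : (dist x p₁)^2 = ‖x - a‖^2 - t^2 := by
    rw [dist_eq_norm, hxeq, norm_sub_sq_real, real_inner_smul_right, hxa,
      norm_smul, hu]
    simp [mul_pow]
    ring
  have htan : Real.tan θ = Real.sin θ / Real.cos θ := Real.tan_eq_sin_div_cos θ
  have hpyth : Real.sin θ ^ 2 + Real.cos θ ^ 2 = 1 := Real.sin_sq_add_cos_sq θ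
  have hsqle : (dist x p₁)^2 ≤ (t * Real.tan θ)^2 := by
    rw [hsq, htan]
    have h1 : ‖x - a‖^2 ≤ (t / Real.cos θ)^2 := by
      have := norm_nonneg (x - a)
      nlinarith
    have : (t * (Real.sin θ / Real.cos θ))^2
        = (t / Real.cos θ)^2 - t^2 := by
      field_simp
      nlinarith
    linarith
  have hdxp : dist x p₁ ≤ t * Real.tan θ := by
    have h0 : (0:ℝ) ≤ dist x p₁ := dist_nonneg
    have h1 : 0 ≤ t * Real.tan θ := by
      apply mul_nonneg ht.le
      rw [htan]; positivity
    have h2 := Real.sqrt_le_sqrt hsqle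
    rwa [Real.sqrt_sq h0, Real.sqrt_sq h1] at h2
  have hqy : dist q y ≤ r := by
    rw [dist_comm]; exact Metric.mem_closedBall.mp hy
  have htri : dist q p₁ ≤ dist q y + dist y x + dist x p₁ :=
    dist_triangle4 q y x p₁
  have hrg : r + γ < (r + γ) / Real.cos θ := by
    rw [lt_div_iff₀ hcos]
    exact mul_lt_of_lt_one_right (by linarith) hcos1
  have : dist y x = dist x y := dist_comm y x
  linarith
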